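/- arXiv:2112.00257 — 3 statements merged into one kernel-verified Lean document; each statement's English description precedes it below -/
import Mathlib

section
/- For every real number α > 0 and every natural number n ≥ 1, the n-th harmonic number H_n = Σ_{k=1}^n 1/k satisfies H_n = (1/2) Σ_{k=1}^n ( ∫_{-∞}^{∞} e^{-α|x|} sech^{k+1}(x) dx + ((α - (k-1))/k) · ∫_{-∞}^{∞} e^{-(α+1)|x|} sech^{k}(x) dx ). -/
open MeasureTheory Real Set Filter

lemma aux_integrable (b : ℝ) (hb : 0 < b) (j : ℕ) :
    IntegrableOn (fun x : ℝ => Real.exp (-b * x) * (1 / Real.cosh x) ^ j) (Ioi 0) := by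
  apply (exp_neg_integrableOn_Ioi 0 hb).mono'
  · exact (((Real.continuous_exp.comp (continuous_const.mul continuous_id)).mul
      ((continuous_const.div Real.continuous_cosh
        (fun x => (Real.cosh_pos x).ne')).pow j)).aestronglyMeasurable)
  · filter_upwards with x
    have h1 : (0:ℝ) < 1 / Real.cosh x := by positivity
    have h2 : (1 : ℝ) / Real.cosh x ≤ 1 := by
      rw [div_le_one (Real.cosh_pos x)]; exact Real.one_le_cosh x
    rw [Real.norm_eq_abs, abs_mul, abs_of_pos (Real.exp_pos _), abs_of_pos (pow_pos h1 j)]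
    calc Real.exp (-b * x) * (1 / Real.cosh x) ^ j
        ≤ Real.exp (-b * x) * 1 := by
          gcongr
          exact pow_le_one₀ h1.le h2
      _ = Real.exp (-b * x) := mul_one _

lemma aux_key (α : ℝ) (hα : 0 < α) (m : ℕ) :
    (∫ x in Ioi (0:ℝ), (Real.exp (-α * x) * (1 / Real.cosh x) ^ (m + 2) +
      ((α - m) / (m + 1)) * (Real.exp (-(α + 1) * x) * (1 / Real.cosh x) ^ (m + 1))))
      = 1 / (m + 1) := by
  set F : ℝ → ℝ := fun x => -(1 / (m + 1)) * (Real.exp (-(α + 1) * x) / (Real.cosh x) ^ (m + 1))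
    with hF
  have hm1 : ((m : ℝ) + 1) ≠ 0 := by positivity
  have hderiv : ∀ x ∈ Ioi (0:ℝ), HasDerivAt F
      (Real.exp (-α * x) * (1 / Real.cosh x) ^ (m + 2) +
        ((α - m) / (m + 1)) * (Real.exp (-(α + 1) * x) * (1 / Real.cosh x) ^ (m + 1))) x := by
    intro x _
    have hc := Real.cosh_pos x
    have hcn : Real.cosh x ^ (m + 1) ≠ 0 := by positivity
    have he : HasDerivAt (fun x : ℝ => Real.exp (-(α + 1) * x))
        (Real.exp (-(α + 1) * x) * (-(α + 1))) x := by
      have h0 := (((hasDerivAt_id x).const_mul (-(α + 1))).exp)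
      simp only [id_eq] at h0
      convert h0 using 1
      ring
    have hp : HasDerivAt (fun x : ℝ => Real.cosh x ^ (m + 1))
        ((m + 1 : ℕ) * Real.cosh x ^ m * Real.sinh x) x := by
      simpa using (Real.hasDerivAt_cosh x).fun_pow (m + 1)
    have hdiv := (he.div hp hcn).const_mul (-(1 / ((m : ℝ) + 1)))
    refine HasDerivAt.congr_deriv hdiv ?_
    have hexp : Real.exp (-α * x) = Real.exp (-(α + 1) * x) * (Real.cosh x + Real.sinh x) := by
      rw [Real.cosh_add_sinh, ← Real.exp_add]
      ring_nf
    rw [hexp]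
    push_cast
    set E := Real.exp (-(α + 1) * x) with hE
    set C := Real.cosh x with hC
    set S := Real.sinh x with hS
    have hC0 : C ≠ 0 := hc.ne'
    simp only [one_div, inv_pow, pow_succ]
    field_simp
    ring
  have hcont : ContinuousWithinAt F (Ici (0:ℝ)) 0 := by
    apply Continuous.continuousWithinAt
    exact continuous_const.mul ((Real.continuous_exp.comp (continuous_const.mul continuous_id)).div
      (Real.continuous_cosh.pow (m + 1)) (fun x => by positivity))
  have htend : Tendsto F atTop (nhds 0) := by
    have h1 : Tendsto (fun x : ℝ => (1 / (m + 1 : ℝ)) * Real.exp (-(α + 1) * x))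
        atTop (nhds 0) := by
      have h2 : Tendsto (fun x : ℝ => Real.exp (-(α + 1) * x)) atTop (nhds 0) :=
        Real.tendsto_exp_atBot.comp
          (tendsto_id.const_mul_atTop_of_neg (by linarith : -(α + 1) < 0))
      simpa using h2.const_mul (1 / (m + 1 : ℝ))
    refine squeeze_zero_norm (fun x => ?_) h1
    have hc1 : (1:ℝ) ≤ Real.cosh x ^ (m + 1) := one_le_pow₀ (Real.one_le_cosh x)
    rw [hF]
    simp only [norm_mul, norm_neg, norm_div, Real.norm_eq_abs]
    rw [abs_one, abs_of_pos (by positivity : (0:ℝ) < (m:ℝ) + 1),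
      abs_of_pos (by positivity : (0:ℝ) < Real.cosh x ^ (m + 1))]
    rw [abs_of_pos (Real.exp_pos _)]
    gcongr
    exact div_le_self (Real.exp_pos _).le hc1
  have hint : IntegrableOn (fun x => Real.exp (-α * x) * (1 / Real.cosh x) ^ (m + 2) +
      ((α - m) / (m + 1)) * (Real.exp (-(α + 1) * x) * (1 / Real.cosh x) ^ (m + 1)))
      (Ioi (0:ℝ)) :=
    (aux_integrable α hα (m + 2)).add
      ((aux_integrable (α + 1) (by linarith) (m + 1)).const_mul _)
  rw [integral_Ioi_of_hasDerivAt_of_tendsto hcont hderiv hint htend]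
  rw [hF]
  simp [Real.cosh_zero]

lemma aux_term (α : ℝ) (hα : 0 < α) (k : ℕ) (hk : 1 ≤ k) :
    ((∫ x : ℝ, Real.exp (-α * |x|) * (1 / Real.cosh x) ^ (k + 1)) +
      ((α - ((k : ℝ) - 1)) / k) *
        ∫ x : ℝ, Real.exp (-(α + 1) * |x|) * (1 / Real.cosh x) ^ k) = 2 * (1 / k) := by
  obtain ⟨m, rfl⟩ := Nat.exists_eq_add_of_le' hk
  have h1 : (∫ x : ℝ, Real.exp (-α * |x|) * (1 / Real.cosh x) ^ (m + 1 + 1)) =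
      2 * ∫ x in Ioi (0:ℝ), Real.exp (-α * x) * (1 / Real.cosh x) ^ (m + 2) := by
    rw [← integral_comp_abs (f := fun x => Real.exp (-α * x) * (1 / Real.cosh x) ^ (m + 2))]
    simp_rw [Real.cosh_abs]
  have h2 : (∫ x : ℝ, Real.exp (-(α + 1) * |x|) * (1 / Real.cosh x) ^ (m + 1)) =
      2 * ∫ x in Ioi (0:ℝ), Real.exp (-(α + 1) * x) * (1 / Real.cosh x) ^ (m + 1) := by
    rw [← integral_comp_abs (f := fun x => Real.exp (-(α + 1) * x) * (1 / Real.cosh x) ^ (m + 1))]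
    simp_rw [Real.cosh_abs]
  have key := aux_key α hα m
  rw [integral_add (aux_integrable α hα (m + 2))
    ((aux_integrable (α + 1) (by linarith) (m + 1)).const_mul _), MeasureTheory.integral_const_mul] at key
  rw [h1, h2]
  push_cast
  have hm1 : ((m : ℝ) + 1) ≠ 0 := by positivity
  have : (α - ((m : ℝ) + 1 - 1)) = α - m := by ring
  rw [this]
  linarith [key]

theorem harmonic_number_as_sum_of_integrals
    (α : ℝ) (hα : 0 < α) (n : ℕ) (hn : 1 ≤ n) :
    (∑ k ∈ Finset.Icc 1 n, (1 : ℝ) / k) =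
      (1 / 2) * ∑ k ∈ Finset.Icc 1 n,
        ((∫ x : ℝ, Real.exp (-α * |x|) * (1 / Real.cosh x) ^ (k + 1)) +
          ((α - ((k : ℝ) - 1)) / k) *
            ∫ x : ℝ, Real.exp (-(α + 1) * |x|) * (1 / Real.cosh x) ^ k) := by
  rw [Finset.sum_congr rfl (fun k hk => aux_term α hα k (Finset.mem_Icc.mp hk).1)]
  rw [← Finset.mul_sum]
  ring
end

section
/- For every real number α > 0 and every natural number n ≥ 1, the n-th harmonic number H_n = Σ_{k=1}^n 1/k satisfies H_n = Σ_{k=1}^n ( I_{k+1} + ((α - (k-1))/k) · J_k ), where I_{k+1} = ∫_{0}^{∞} e^{-αx} sech^{k+1}(x) dx and J_k = ∫_{0}^{∞} e^{-(α+1)x} sech^{k}(x) dx. -/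
open MeasureTheory Real

lemma sech_pow_cont (m : ℕ) : Continuous (fun x => (1 / Real.cosh x) ^ m) := by
  apply Continuous.pow
  exact continuous_const.div Real.continuous_cosh (fun x => (Real.cosh_pos x).ne')

lemma sech_pow_le_one (x : ℝ) (m : ℕ) : (1 / Real.cosh x) ^ m ≤ 1 := by
  apply pow_le_one₀
  · positivity
  · rw [div_le_one (Real.cosh_pos x)]
    exact Real.one_le_cosh x

lemma sech_pow_integrable (β : ℝ) (hβ : 0 < β) (m : ℕ) :
    IntegrableOn (fun x => Real.exp (-β * x) * (1 / Real.cosh x) ^ m) (Set.Ioi (0 : ℝ)) := by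
  have hexp : IntegrableOn (fun x => Real.exp (-β * x)) (Set.Ioi (0 : ℝ)) :=
    exp_neg_integrableOn_Ioi 0 hβ
  refine hexp.mono' ?_ ?_
  · exact (Real.continuous_exp.comp (continuous_const.mul continuous_id)).mul
      (sech_pow_cont m) |>.aestronglyMeasurable
  · filter_upwards with x
    have h2 : (0 : ℝ) < Real.cosh x := Real.cosh_pos x
    have h4 := sech_pow_le_one x m
    rw [Real.norm_eq_abs, abs_of_nonneg (by positivity)]
    nlinarith [Real.exp_pos (-β * x), pow_nonneg (by positivity : (0:ℝ) ≤ 1 / Real.cosh x) m]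

lemma key_deriv (α : ℝ) (k : ℕ) (hk : 1 ≤ k) (x : ℝ) :
    HasDerivAt (fun x => Real.exp (-(α + 1) * x) * (1 / Real.cosh x) ^ k)
      (((k : ℝ) - α - 1) * (Real.exp (-(α + 1) * x) * (1 / Real.cosh x) ^ k)
        - (k : ℝ) * (Real.exp (-α * x) * (1 / Real.cosh x) ^ (k + 1))) x := by
  have hc : Real.cosh x ≠ 0 := (Real.cosh_pos x).ne'
  have h1 : HasDerivAt (fun x => Real.exp (-(α + 1) * x))
      (-(α + 1) * Real.exp (-(α + 1) * x)) x := by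
    simpa [mul_comm] using ((hasDerivAt_id x).const_mul (-(α + 1))).exp
  have h2 : HasDerivAt (fun x => (Real.cosh x)⁻¹)
      (-(Real.sinh x) / (Real.cosh x) ^ 2) x :=
    (Real.hasDerivAt_cosh x).inv hc
  have h3 : HasDerivAt (fun x => ((Real.cosh x)⁻¹) ^ k)
      ((k : ℕ) * ((Real.cosh x)⁻¹) ^ (k - 1) * (-(Real.sinh x) / (Real.cosh x) ^ 2)) x :=
    h2.pow k
  have h4 := h1.mul h3
  have heq : (fun x : ℝ => Real.exp (-(α + 1) * x) * (1 / Real.cosh x) ^ k)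
      = (fun x => Real.exp (-(α + 1) * x) * ((Real.cosh x)⁻¹) ^ k) := by
    funext y; rw [one_div]
  rw [heq]
  convert h4 using 1
  · rfl
  · rfl
  · rfl
  rw [one_div]
  have hsc : -Real.sinh x / Real.cosh x ^ 2
      = (Real.cosh x - Real.exp x) * ((Real.cosh x)⁻¹) ^ 2 := by
    rw [div_eq_iff (pow_ne_zero 2 hc), mul_assoc, ← mul_pow, inv_mul_cancel₀ hc, one_pow, mul_one]
    linarith [Real.cosh_add_sinh x]
  have hE2 : Real.exp (-α * x) = Real.exp (-(α + 1) * x) * Real.exp x := by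
    rw [← Real.exp_add]; ring_nf
  have h5 : ((Real.cosh x)⁻¹) ^ (k - 1) * ((Real.cosh x)⁻¹) ^ 2
      = ((Real.cosh x)⁻¹) ^ (k + 1) := by
    rw [← pow_add]; congr 1; omega
  have h6 : Real.cosh x * ((Real.cosh x)⁻¹) ^ (k + 1) = ((Real.cosh x)⁻¹) ^ k := by
    rw [pow_succ, ← mul_assoc, mul_comm (Real.cosh x), mul_assoc, mul_inv_cancel₀ hc, mul_one]
  rw [hsc, hE2]
  linear_combination ((k : ℝ) * Real.exp (-(α + 1) * x) * Real.exp x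
      - (k : ℝ) * Real.exp (-(α + 1) * x) * Real.cosh x) * h5
    - (k : ℝ) * Real.exp (-(α + 1) * x) * h6

lemma key_eq (α : ℝ) (hα : 0 < α) (k : ℕ) (hk : 1 ≤ k) :
    (∫ x in Set.Ioi (0 : ℝ), Real.exp (-α * x) * (1 / Real.cosh x) ^ (k + 1)) +
      ((α - ((k : ℝ) - 1)) / k) *
        ∫ x in Set.Ioi (0 : ℝ), Real.exp (-(α + 1) * x) * (1 / Real.cosh x) ^ k
    = 1 / (k : ℝ) := by
  have hI : IntegrableOn (fun x => Real.exp (-α * x) * (1 / Real.cosh x) ^ (k + 1))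
      (Set.Ioi (0 : ℝ)) := sech_pow_integrable α hα (k + 1)
  have hJ : IntegrableOn (fun x => Real.exp (-(α + 1) * x) * (1 / Real.cosh x) ^ k)
      (Set.Ioi (0 : ℝ)) := sech_pow_integrable (α + 1) (by linarith) k
  set f' : ℝ → ℝ := fun x =>
    ((k : ℝ) - α - 1) * (Real.exp (-(α + 1) * x) * (1 / Real.cosh x) ^ k)
      - (k : ℝ) * (Real.exp (-α * x) * (1 / Real.cosh x) ^ (k + 1)) with hf'
  have hf'int : IntegrableOn f' (Set.Ioi (0 : ℝ)) :=
    ((hJ.const_mul _).sub (hI.const_mul _))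
  have htend : Filter.Tendsto (fun x => Real.exp (-(α + 1) * x) * (1 / Real.cosh x) ^ k)
      Filter.atTop (nhds 0) := by
    have h0 : Filter.Tendsto (fun x : ℝ => Real.exp (-(α + 1) * x)) Filter.atTop (nhds 0) := by
      have hx : Filter.Tendsto (fun x : ℝ => -(α + 1) * x) Filter.atTop Filter.atBot := by
        have : Filter.Tendsto (fun x : ℝ => (α + 1) * x) Filter.atTop Filter.atTop :=
          Filter.Tendsto.const_mul_atTop (by linarith) Filter.tendsto_id
        have := Filter.tendsto_neg_atTop_atBot.comp this
        refine this.congr fun y => ?_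
        simp [Function.comp]; ring
      exact Real.tendsto_exp_atBot.comp hx
    apply squeeze_zero' (Filter.Eventually.of_forall ?_) (Filter.Eventually.of_forall ?_) h0
    · intro x
      have := Real.cosh_pos x
      positivity
    · intro x
      have h4 := sech_pow_le_one x k
      have h2 := Real.cosh_pos x
      nlinarith [Real.exp_pos (-(α + 1) * x),
        pow_nonneg (by positivity : (0:ℝ) ≤ 1 / Real.cosh x) k]
  have hmain := integral_Ioi_of_hasDerivAt_of_tendsto'
    (f := fun x => Real.exp (-(α + 1) * x) * (1 / Real.cosh x) ^ k) (f' := f')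
    (fun x _ => key_deriv α k hk x) hf'int htend
  norm_num [Real.cosh_zero] at hmain
  have hsplit : ∫ x in Set.Ioi (0 : ℝ), f' x
      = ((k : ℝ) - α - 1) * (∫ x in Set.Ioi (0 : ℝ),
          Real.exp (-(α + 1) * x) * (1 / Real.cosh x) ^ k)
        - (k : ℝ) * ∫ x in Set.Ioi (0 : ℝ),
          Real.exp (-α * x) * (1 / Real.cosh x) ^ (k + 1) := by
    simp only [hf']
    rw [integral_sub (hJ.const_mul _) (hI.const_mul _), integral_const_mul, integral_const_mul]
  rw [hsplit] at hmain
  have hk0 : (k : ℝ) ≠ 0 := by positivity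
  set I := ∫ x in Set.Ioi (0 : ℝ), Real.exp (-α * x) * (1 / Real.cosh x) ^ (k + 1) with hIdef
  set J := ∫ x in Set.Ioi (0 : ℝ), Real.exp (-(α + 1) * x) * (1 / Real.cosh x) ^ k with hJdef
  field_simp
  linear_combination -hmain

theorem harmonic_number_as_sum_of_half_line_integrals
    (α : ℝ) (hα : 0 < α) (n : ℕ) (hn : 1 ≤ n) :
    (∑ k ∈ Finset.Icc 1 n, (1 : ℝ) / k) =
      ∑ k ∈ Finset.Icc 1 n,
        ((∫ x in Set.Ioi (0 : ℝ), Real.exp (-α * x) * (1 / Real.cosh x) ^ (k + 1)) +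
          ((α - ((k : ℝ) - 1)) / k) *
            ∫ x in Set.Ioi (0 : ℝ), Real.exp (-(α + 1) * x) * (1 / Real.cosh x) ^ k) := by
  refine Finset.sum_congr rfl fun k hk => ?_
  rw [Finset.mem_Icc] at hk
  exact (key_eq α hα k hk.1).symm
end

section
/- For every real number α > 0 and every natural number k ≥ 1, ∫_{0}^{∞} e^{-αx} sech^{k+1}(x) dx + ((α - (k-1))/k) · ∫_{0}^{∞} e^{-(α+1)x} sech^{k}(x) dx = 1/k. -/
open MeasureTheory Real

private lemma sech_le_one (x : ℝ) : (1 / Real.cosh x) ^ (n : ℕ) ≤ 1 :=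
  pow_le_one₀ (by positivity) (by rw [div_le_one (Real.cosh_pos x)]; exact Real.one_le_cosh x)

private lemma integ_aux (b : ℝ) (hb : 0 < b) (n : ℕ) :
    IntegrableOn (fun x => Real.exp (-b * x) * (1 / Real.cosh x) ^ n) (Set.Ioi (0 : ℝ)) := by
  apply MeasureTheory.Integrable.mono (exp_neg_integrableOn_Ioi 0 hb)
  · exact ((Real.continuous_exp.comp (continuous_const.mul continuous_id)).mul
      ((Real.continuous_cosh.inv₀ fun x => (Real.cosh_pos x).ne').pow n |>.congr
        (by simp [one_div]))).aestronglyMeasurable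
  · filter_upwards with x
    have h1 : (1 / Real.cosh x) ^ n ≤ 1 := sech_le_one x
    have h2 : (0:ℝ) ≤ (1 / Real.cosh x) ^ n := by positivity
    rw [Real.norm_eq_abs, Real.norm_eq_abs, abs_of_nonneg (by positivity),
      abs_of_nonneg (Real.exp_nonneg _)]
    nlinarith [Real.exp_pos (-b*x)]

private lemma key (α : ℝ) (hα : 0 < α) (m : ℕ) :
    ((m:ℝ)+1) * (∫ x in Set.Ioi (0:ℝ), Real.exp (-α * x) * (1 / Real.cosh x) ^ (m + 2)) +
      (α - m) * (∫ x in Set.Ioi (0:ℝ), Real.exp (-(α+1) * x) * (1 / Real.cosh x) ^ (m+1)) = 1 := by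
  set F : ℝ → ℝ := fun x => Real.exp (-(α+1) * x) * (1 / Real.cosh x) ^ (m+1) with hF
  set g : ℝ → ℝ := fun x => ((m:ℝ)+1) * (Real.exp (-α * x) * (1 / Real.cosh x) ^ (m + 2)) +
      (α - m) * (Real.exp (-(α+1) * x) * (1 / Real.cosh x) ^ (m+1)) with hg
  have hderiv : ∀ x ∈ Set.Ici (0:ℝ), HasDerivAt F (-g x) x := by
    intro x _
    have hc : (Real.cosh x) ≠ 0 := (Real.cosh_pos x).ne'
    have he : HasDerivAt (fun x => Real.exp (-(α+1) * x)) (-(α+1) * Real.exp (-(α+1)*x)) x := by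
      simpa [mul_comm] using ((hasDerivAt_id x).const_mul (-(α+1))).exp
    have hcp : HasDerivAt (fun x => Real.cosh x ^ (m+1))
        ((m+1 : ℕ) * Real.cosh x ^ m * Real.sinh x) x := by
      simpa using (Real.hasDerivAt_cosh x).fun_pow (m+1)
    have hd := he.fun_div hcp (pow_ne_zero _ hc)
    have hFeq : F = fun x => Real.exp (-(α+1) * x) / Real.cosh x ^ (m+1) := by
      funext y; simp [hF, div_pow, one_div, div_eq_mul_inv]
    rw [hFeq]
    refine hd.congr_deriv (Eq.symm ?_)
    have h1 : Real.sinh x = Real.cosh x - Real.exp (-x) := by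
      rw [Real.sinh_eq, Real.cosh_eq]; ring
    have h2 : Real.exp (-α*x) = Real.exp (-(α+1)*x) * Real.exp x := by
      rw [← Real.exp_add]; ring_nf
    have h3 : Real.exp x = 2 * Real.cosh x - Real.exp (-x) := by
      rw [Real.cosh_eq]; ring
    simp only [hg, h2, h3, h1]
    push_cast
    simp only [div_pow, one_pow]
    field_simp
    ring
  have hcont : ContinuousWithinAt F (Set.Ici 0) 0 :=
    ((hderiv 0 Set.self_mem_Ici).continuousAt).continuousWithinAt
  have hint : IntegrableOn (fun x => -g x) (Set.Ioi (0:ℝ)) := by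
    apply Integrable.neg
    exact (((integ_aux α hα (m+2)).const_mul _).add
      (((integ_aux (α+1) (by linarith) (m+1)).const_mul _)))
  have htend : Filter.Tendsto F Filter.atTop (nhds 0) := by
    apply squeeze_zero (fun x => by positivity)
      (g := fun x => Real.exp (-(α+1) * x))
      (fun x => by
        have h1 : (1 / Real.cosh x) ^ (m+1) ≤ 1 := sech_le_one x
        calc F x ≤ Real.exp (-(α+1)*x) * 1 := by
              exact mul_le_mul_of_nonneg_left h1 (Real.exp_nonneg _)
          _ = _ := mul_one _)
    have : Filter.Tendsto (fun x : ℝ => -(α+1) * x) Filter.atTop Filter.atBot :=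
      Filter.Tendsto.const_mul_atTop_of_neg (by linarith) Filter.tendsto_id
    exact Real.tendsto_exp_atBot.comp this
  have h0 : ∫ x in Set.Ioi (0:ℝ), -g x = 0 - F 0 :=
    integral_Ioi_of_hasDerivAt_of_tendsto hcont (fun x hx => hderiv x (Set.mem_Ici.mpr (le_of_lt hx))) hint htend
  have hF0 : F 0 = 1 := by simp [hF]
  rw [integral_neg, hF0] at h0
  have hgint : ∫ x in Set.Ioi (0:ℝ), g x = 1 := by linarith
  rw [hg] at hgint
  rw [integral_add ((integ_aux α hα (m+2)).const_mul _)
    ((integ_aux (α+1) (by linarith) (m+1)).const_mul _),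
    integral_const_mul, integral_const_mul] at hgint
  simp only [hF]
  linarith

theorem inductive_step_integral_identity (α : ℝ) (hα : 0 < α) (k : ℕ) (hk : 1 ≤ k) :
    (∫ x in Set.Ioi (0 : ℝ), Real.exp (-α * x) * (1 / Real.cosh x) ^ (k + 1)) +
      ((α - ((k : ℝ) - 1)) / k) *
        ∫ x in Set.Ioi (0 : ℝ), Real.exp (-(α + 1) * x) * (1 / Real.cosh x) ^ k
      = 1 / k := by
  obtain ⟨m, rfl⟩ : ∃ m, k = m + 1 := ⟨k - 1, (Nat.succ_pred_eq_of_pos hk).symm⟩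
  have h := key α hα m
  have hk0 : ((m:ℝ) + 1) ≠ 0 := by positivity
  push_cast
  rw [show m + 1 + 1 = m + 2 from rfl]
  field_simp at h ⊢
  ring_nf at h ⊢
  linarith
end
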